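/- Let A = diag(1,1,p,p) ∈ GSp₄(ℚ_p) and Γ^A = GSp₄(ℤ_p) ∩ A GSp₄(ℤ_p) A^{-1}. Then Γ^A·e₃ = ℤ_p⁴ \ Aℤ_p⁴ and Γ^A·e₁ = Aℤ_p⁴ \ pℤ_p⁴; in particular ℤ_p⁴ = Γ^A e₃ ⊔ Γ^A e₁ ⊔ pℤ_p⁴ (disjoint union). -/

import Mathlib

/-! STATEMENT 15: for `A = diag(1,1,p,p)` and `Γ^A = GSp₄(ℤ_p) ∩ A GSp₄(ℤ_p) A⁻¹`,
one has `Γ^A·e₃ = ℤ_p⁴ \ Aℤ_p⁴`, `Γ^A·e₁ = Aℤ_p⁴ \ pℤ_p⁴`, and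
`ℤ_p⁴ = Γ^A e₃ ⊔ Γ^A e₁ ⊔ pℤ_p⁴` (disjoint union). -/

open Matrix

/-- Coordinates of `ℚ_p⁴`, the `i`-th coordinate pairing with the `(2+i)`-th. -/
abbrev Idx := Fin 2 ⊕ Fin 2

/-- The standard symplectic form on `ℚ_p⁴`. -/
noncomputable def Jmat (p : ℕ) [Fact p.Prime] : Matrix Idx Idx ℚ_[p] :=
  Matrix.fromBlocks 0 1 (-1) 0

/-- `GSp₄(ℚ_p)`: symplectic similitude matrices. -/
def GSpQ (p : ℕ) [Fact p.Prime] : Set (Matrix Idx Idx ℚ_[p]) :=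
  {A | ∃ μ : ℚ_[p], μ ≠ 0 ∧ Aᵀ * Jmat p * A = μ • Jmat p}

/-- `GSp₄(ℤ_p) = GSp₄(ℚ_p) ∩ GL₄(ℤ_p)`. -/
def GSpZ (p : ℕ) [Fact p.Prime] : Set (Matrix Idx Idx ℚ_[p]) :=
  {A | A ∈ GSpQ p ∧ (∀ i j, ‖A i j‖ ≤ 1) ∧ ‖A.det‖ = 1}

/-- `ℤ_p⁴` inside `ℚ_p⁴`. -/
def Zp4 (p : ℕ) [Fact p.Prime] : Set (Idx → ℚ_[p]) :=
  {v | ∀ i, ‖v i‖ ≤ 1}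

/-- `A = diag(1,1,p,p)`. -/
noncomputable def Amat (p : ℕ) [Fact p.Prime] : Matrix Idx Idx ℚ_[p] :=
  Matrix.diagonal (Sum.elim ![1, 1] ![(p : ℚ_[p]), (p : ℚ_[p])])

/-- `Γ^A = GSp₄(ℤ_p) ∩ A GSp₄(ℤ_p) A⁻¹`. -/
noncomputable def GammaA (p : ℕ) [Fact p.Prime] : Set (Matrix Idx Idx ℚ_[p]) :=
  {X | X ∈ GSpZ p ∧ (Amat p)⁻¹ * X * Amat p ∈ GSpZ p}

/-- `e₁ = (1,0,0,0)ᵗ`. -/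
noncomputable def e1 (p : ℕ) [Fact p.Prime] : Idx → ℚ_[p] :=
  fun i => if i = Sum.inl 0 then 1 else 0

/-- `e₃ = (0,0,1,0)ᵗ`. -/
noncomputable def e3 (p : ℕ) [Fact p.Prime] : Idx → ℚ_[p] :=
  fun i => if i = Sum.inr 0 then 1 else 0


namespace Orb15
variable (p : ℕ) [Fact p.Prime]


noncomputable def dA : Idx → ℚ_[p] := Sum.elim ![1,1] ![(p:ℚ_[p]), (p:ℚ_[p])]

lemma pne : (p:ℚ_[p]) ≠ 0 := Nat.cast_ne_zero.mpr (Fact.out : p.Prime).ne_zero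
lemma normp_pos : 0 < ‖(p:ℚ_[p])‖ := norm_pos_iff.mpr (pne p)
lemma normp_lt_one : ‖(p:ℚ_[p])‖ < 1 := by
  rw [Padic.norm_p]
  have hp1 : (1:ℝ) < p := by exact_mod_cast (Fact.out : p.Prime).one_lt
  rw [inv_lt_one_iff₀]; right; exact hp1
lemma normp_le_one : ‖(p:ℚ_[p])‖ ≤ 1 := le_of_lt (normp_lt_one p)

lemma dA_inl (k : Fin 2) : dA p (Sum.inl k) = 1 := by fin_cases k <;> rfl
lemma dA_inr (k : Fin 2) : dA p (Sum.inr k) = (p:ℚ_[p]) := by fin_cases k <;> rfl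
lemma dA_ne (i : Idx) : dA p i ≠ 0 := by
  rcases i with k | k
  · rw [dA_inl]; exact one_ne_zero
  · rw [dA_inr]; exact pne p

lemma Amat_eq : Amat p = Matrix.diagonal (dA p) := rfl

lemma Amat_inv : (Amat p)⁻¹ = Matrix.diagonal (fun i => (dA p i)⁻¹) := by
  apply Matrix.inv_eq_right_inv
  rw [Amat_eq, Matrix.diagonal_mul_diagonal]
  ext i j
  rcases eq_or_ne i j with rfl | h
  · simp [Matrix.diagonal_apply_eq, mul_inv_cancel₀ (dA_ne p i)]
  · simp [Matrix.diagonal_apply_ne _ h, Matrix.one_apply_ne h]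

lemma conj_apply (X : Matrix Idx Idx ℚ_[p]) (i j : Idx) :
    ((Amat p)⁻¹ * X * (Amat p)) i j = (dA p i)⁻¹ * X i j * dA p j := by
  rw [Amat_inv, Amat_eq, Matrix.mul_diagonal, Matrix.diagonal_mul]

/-- a matrix with integral entries has integral det -/
lemma norm_det_le_one (M : Matrix Idx Idx ℚ_[p]) (h : ∀ i j, ‖M i j‖ ≤ 1) :
    ‖M.det‖ ≤ 1 := by
  set M' : Matrix Idx Idx ℤ_[p] := fun i j => ⟨M i j, h i j⟩ with hM'
  have : M = (PadicInt.Coe.ringHom (p := p)).mapMatrix M' := by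
    ext i j; rfl
  rw [this, ← RingHom.map_det]
  exact PadicInt.norm_le_one _

lemma unit_of (x:ℚ_[p])(h1:‖x‖≤1)(h2:¬ ‖x‖ ≤ ‖(p:ℚ_[p])‖) : ‖x‖ = 1 := by
  have hp1 : (1:ℝ) < p := by exact_mod_cast (Fact.out : p.Prime).one_lt
  have hx : x ≠ 0 := by rintro rfl; exact h2 (by simp)
  rw [Padic.norm_eq_zpow_neg_valuation hx] at *
  rw [Padic.norm_p] at h2
  have h2' : (p:ℝ)^(-1:ℤ) < (p:ℝ)^(-x.valuation) := by
    rw [_root_.zpow_neg_one]; exact lt_of_not_ge h2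
  have hv1 : (-1:ℤ) < -x.valuation := (zpow_lt_zpow_iff_right₀ hp1).mp h2'
  have hv3 : (0:ℤ) ≤ -x.valuation := by omega
  have hv2 : -x.valuation ≤ 0 := by
    by_contra h
    push_neg at h
    have : (p:ℝ)^(0:ℤ) < (p:ℝ)^(-x.valuation) := (zpow_lt_zpow_iff_right₀ hp1).mpr h
    simp only [zpow_zero] at this; linarith
  have h0 : -x.valuation = 0 := le_antisymm hv2 hv3
  rw [h0]; simp

/-- det of an integral matrix with a column divisible by p -/
lemma norm_det_le_p (M : Matrix Idx Idx ℚ_[p]) (h : ∀ i j, ‖M i j‖ ≤ 1)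
    (j₀ : Idx) (hc : ∀ i, ‖M i j₀‖ ≤ ‖(p:ℚ_[p])‖) : ‖M.det‖ ≤ ‖(p:ℚ_[p])‖ := by
  set c : Idx → ℚ_[p] := fun i => (p:ℚ_[p])⁻¹ * M i j₀ with hc'
  have hcint : ∀ i, ‖c i‖ ≤ 1 := by
    intro i
    rw [hc', norm_mul, norm_inv]
    rw [inv_mul_le_one₀ (normp_pos p)]
    exact hc i
  have hM : M = M.updateCol j₀ ((p:ℚ_[p]) • c) := by
    ext i j
    by_cases hj : j = j₀
    · subst hj
      rw [Matrix.updateCol_self]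
      simp [hc', ← mul_assoc, mul_inv_cancel₀ (pne p)]
    · rw [Matrix.updateCol_ne hj]
  calc ‖M.det‖ = ‖(M.updateCol j₀ ((p:ℚ_[p]) • c)).det‖ := by rw [← hM]
    _ = ‖(p:ℚ_[p])‖ * ‖(M.updateCol j₀ c).det‖ := by
        rw [Matrix.det_updateCol_smul, norm_mul]
    _ ≤ ‖(p:ℚ_[p])‖ * 1 := by
        apply mul_le_mul_of_nonneg_left _ (norm_nonneg _)
        apply norm_det_le_one
        intro i j
        by_cases hj : j = j₀
        · subst hj; rw [Matrix.updateCol_self]; exact hcint i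
        · rw [Matrix.updateCol_ne hj]; exact h i j
    _ = ‖(p:ℚ_[p])‖ := mul_one _



lemma J_mul_J : Jmat p * Jmat p = -1 := by
  ext i j
  rcases i with a|a <;> rcases j with b|b <;>
    simp [Jmat, Matrix.mul_apply, Fintype.sum_sum_type, Fin.sum_univ_two,
      Matrix.one_apply] <;> fin_cases a <;> fin_cases b <;> simp

lemma J_det_ne : (Jmat p).det ≠ 0 := by
  intro h
  have hsq := congrArg Matrix.det (J_mul_J p)
  rw [Matrix.det_mul, Matrix.det_neg, h] at hsq
  norm_num at hsq

lemma gsp_norm_det {X : Matrix Idx Idx ℚ_[p]} {μ : ℚ_[p]} (hμ : μ ≠ 0)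
    (h : Xᵀ * Jmat p * X = μ • Jmat p) : ‖X.det‖ = ‖μ‖ ^ 2 := by
  have hd := congrArg Matrix.det h
  rw [Matrix.det_mul, Matrix.det_mul, Matrix.det_transpose, Matrix.det_smul] at hd
  have hcard : Fintype.card Idx = 4 := rfl
  rw [hcard] at hd
  have h2 : X.det * X.det = μ ^ 4 := by
    apply mul_right_cancel₀ (J_det_ne p)
    linear_combination hd
  have hn : ‖X.det‖ * ‖X.det‖ = ‖μ‖^4 := by
    rw [← norm_mul, h2, norm_pow]
  nlinarith [norm_nonneg X.det, norm_nonneg μ]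

lemma sim_diag (α β : ℚ_[p]) (d : Idx → ℚ_[p])
    (h1 : ∀ k, d (Sum.inl k) = α) (h2 : ∀ k, d (Sum.inr k) = β) :
    (Matrix.diagonal d)ᵀ * Jmat p * Matrix.diagonal d = (α * β) • Jmat p := by
  rw [Matrix.diagonal_transpose]
  ext i j
  rw [Matrix.mul_diagonal, Matrix.diagonal_mul, Matrix.smul_apply]
  rcases i with a | a <;> rcases j with b | b <;>
    simp [Jmat, h1, h2, Matrix.one_apply, smul_eq_mul] <;> ring

lemma conj_sim {X : Matrix Idx Idx ℚ_[p]} {μ : ℚ_[p]}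
    (h : Xᵀ * Jmat p * X = μ • Jmat p) :
    ((Amat p)⁻¹ * X * Amat p)ᵀ * Jmat p * ((Amat p)⁻¹ * X * Amat p) = μ • Jmat p := by
  have hA : (Amat p)ᵀ * Jmat p * Amat p = ((1:ℚ_[p]) * p) • Jmat p := by
    rw [Amat_eq]; exact sim_diag p 1 p _ (dA_inl p) (dA_inr p)
  have hAi : ((Amat p)⁻¹)ᵀ * Jmat p * (Amat p)⁻¹ = ((1:ℚ_[p]) * (p:ℚ_[p])⁻¹) • Jmat p := by
    rw [Amat_inv]
    apply sim_diag
    · intro k; rw [dA_inl]; exact inv_one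
    · intro k; rw [dA_inr]
  rw [Matrix.transpose_mul, Matrix.transpose_mul]
  calc ((Amat p)ᵀ * (Xᵀ * ((Amat p)⁻¹)ᵀ)) * Jmat p * ((Amat p)⁻¹ * X * Amat p)
      = (Amat p)ᵀ * (Xᵀ * (((Amat p)⁻¹)ᵀ * Jmat p * (Amat p)⁻¹) * X) * Amat p := by
        noncomm_ring
    _ = (Amat p)ᵀ * (Xᵀ * (((1:ℚ_[p]) * (p:ℚ_[p])⁻¹) • Jmat p) * X) * Amat p := by rw [hAi]
    _ = ((1:ℚ_[p]) * (p:ℚ_[p])⁻¹) • ((Amat p)ᵀ * (Xᵀ * Jmat p * X) * Amat p) := by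
        simp [Matrix.mul_smul, Matrix.smul_mul, mul_assoc]
    _ = ((1:ℚ_[p]) * (p:ℚ_[p])⁻¹) • ((Amat p)ᵀ * (μ • Jmat p) * Amat p) := by rw [h]
    _ = ((1:ℚ_[p]) * (p:ℚ_[p])⁻¹) • (μ • ((Amat p)ᵀ * Jmat p * Amat p)) := by
        simp [Matrix.mul_smul, Matrix.smul_mul]
    _ = ((1:ℚ_[p]) * (p:ℚ_[p])⁻¹) • (μ • (((1:ℚ_[p]) * p) • Jmat p)) := by rw [hA]
    _ = μ • Jmat p := by
        rw [smul_smul, smul_smul]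
        congr 1
        field_simp
        exact mul_div_cancel_left₀ _ (pne p)


lemma mulVec_e3 (X : Matrix Idx Idx ℚ_[p]) : X.mulVec (e3 p) = fun i => X i (Sum.inr 0) := by
  funext i
  simp [Matrix.mulVec, dotProduct, e3, Fintype.sum_sum_type, Fin.sum_univ_two]

lemma mulVec_e1 (X : Matrix Idx Idx ℚ_[p]) : X.mulVec (e1 p) = fun i => X i (Sum.inl 0) := by
  funext i
  simp [Matrix.mulVec, dotProduct, e1, Fintype.sum_sum_type, Fin.sum_univ_two]

lemma mem_GammaA_iff (X : Matrix Idx Idx ℚ_[p]) :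
    X ∈ GammaA p ↔ (X ∈ GSpQ p ∧ (∀ i j, ‖X i j‖ ≤ 1) ∧ ‖X.det‖ = 1 ∧
      ∀ a b : Fin 2, ‖X (Sum.inr a) (Sum.inl b)‖ ≤ ‖(p:ℚ_[p])‖) := by
  constructor
  · rintro ⟨⟨hQ, hint, hdet⟩, ⟨hQ', hint', hdet'⟩⟩
    refine ⟨hQ, hint, hdet, fun a b => ?_⟩
    have h := hint' (Sum.inr a) (Sum.inl b)
    rw [conj_apply, dA_inr, dA_inl, mul_one, norm_mul, norm_inv] at h
    rwa [inv_mul_le_one₀ (normp_pos p)] at h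
  · rintro ⟨⟨μ, hμ, hsim⟩, hint, hdet, hc⟩
    have hY := conj_sim p hsim
    have hdetY : ‖((Amat p)⁻¹ * X * Amat p).det‖ = 1 := by
      rw [gsp_norm_det p hμ hY]
      rw [← gsp_norm_det p hμ hsim]
      exact hdet
    refine ⟨⟨⟨μ, hμ, hsim⟩, hint, hdet⟩, ⟨μ, hμ, hY⟩, ?_, hdetY⟩
    intro i j
    rw [conj_apply]
    rcases i with a | a <;> rcases j with b | b
    · rw [dA_inl, dA_inl, inv_one, one_mul, mul_one]; exact hint _ _
    · rw [dA_inl, dA_inr, inv_one, one_mul, norm_mul]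
      calc ‖X (Sum.inl a) (Sum.inr b)‖ * ‖(p:ℚ_[p])‖ ≤ 1 * 1 :=
        mul_le_mul (hint _ _) (normp_le_one p) (norm_nonneg _) zero_le_one
      _ = 1 := mul_one 1
    · rw [dA_inr, dA_inl, mul_one, norm_mul, norm_inv,
        inv_mul_le_one₀ (normp_pos p)]
      exact hc a b
    · rw [dA_inr, dA_inr, norm_mul, norm_mul, norm_inv]
      rw [mul_comm, ← mul_assoc, mul_inv_cancel₀ (normp_pos p).ne', one_mul]
      exact hint _ _

lemma mem_AZ_iff (w : Idx → ℚ_[p]) :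
    (∃ v ∈ Zp4 p, w = (Amat p).mulVec v) ↔
      ((∀ k, ‖w (Sum.inl k)‖ ≤ 1) ∧ (∀ k, ‖w (Sum.inr k)‖ ≤ ‖(p:ℚ_[p])‖)) := by
  constructor
  · rintro ⟨v, hv, rfl⟩
    constructor
    · intro k
      rw [Amat_eq, Matrix.mulVec_diagonal, dA_inl, one_mul]
      exact hv _
    · intro k
      rw [Amat_eq, Matrix.mulVec_diagonal, dA_inr, norm_mul]
      calc ‖(p:ℚ_[p])‖ * ‖v (Sum.inr k)‖ ≤ ‖(p:ℚ_[p])‖ * 1 :=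
        mul_le_mul_of_nonneg_left (hv _) (norm_nonneg _)
      _ = ‖(p:ℚ_[p])‖ := mul_one _
  · rintro ⟨h1, h2⟩
    refine ⟨fun i => (dA p i)⁻¹ * w i, ?_, ?_⟩
    · intro i
      dsimp only
      rcases i with k | k
      · rw [dA_inl, inv_one, one_mul]; exact h1 k
      · rw [dA_inr, norm_mul, norm_inv, inv_mul_le_one₀ (normp_pos p)]
        exact h2 k
    · funext i
      rw [Amat_eq, Matrix.mulVec_diagonal, ← mul_assoc, mul_inv_cancel₀ (dA_ne p i), one_mul]

lemma mem_pZ_iff (w : Idx → ℚ_[p]) :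
    (∃ v ∈ Zp4 p, w = (p:ℚ_[p]) • v) ↔ ∀ i, ‖w i‖ ≤ ‖(p:ℚ_[p])‖ := by
  constructor
  · rintro ⟨v, hv, rfl⟩
    intro i
    rw [Pi.smul_apply, smul_eq_mul, norm_mul]
    calc ‖(p:ℚ_[p])‖ * ‖v i‖ ≤ ‖(p:ℚ_[p])‖ * 1 :=
      mul_le_mul_of_nonneg_left (hv _) (norm_nonneg _)
    _ = _ := mul_one _
  · intro h
    refine ⟨fun i => (p:ℚ_[p])⁻¹ * w i, ?_, ?_⟩
    · intro i
      rw [norm_mul, norm_inv, inv_mul_le_one₀ (normp_pos p)]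
      exact h i
    · funext i
      simp [← mul_assoc, mul_inv_cancel₀ (pne p)]



noncomputable def M3a (v : Idx → ℚ_[p]) (u : ℚ_[p]) : Matrix Idx Idx ℚ_[p] :=
  Matrix.fromBlocks !![u, -(v (Sum.inr 1))*u; 0, 1] !![v (Sum.inl 0), v (Sum.inl 1)*u; v (Sum.inl 1), 0]
    0 !![v (Sum.inr 0), 0; v (Sum.inr 1), 1]

lemma M3a_spec (v : Idx → ℚ_[p]) (u : ℚ_[p]) (hu : u * v (Sum.inr 0) = 1) (hun : ‖u‖ ≤ 1)
    (hv : ∀ i, ‖v i‖ ≤ 1) : M3a p v u ∈ GammaA p ∧ (M3a p v u).mulVec (e3 p) = v := by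
  have hsim : (M3a p v u)ᵀ * Jmat p * (M3a p v u) = (1:ℚ_[p]) • Jmat p := by
    ext i j
    rcases i with a | a <;> rcases j with b | b <;> fin_cases a <;> fin_cases b <;>
      simp [Matrix.mul_apply, Fintype.sum_sum_type, Fin.sum_univ_two, Jmat, M3a, Fin.mk_zero, Fin.mk_one,
        Matrix.one_apply] <;>
      first
        | ring1
        | linear_combination hu
        | linear_combination (-1:ℚ_[p]) * hu
        | linear_combination v (Sum.inl 0) * hu
        | linear_combination (-(v (Sum.inl 0))) * hu
        | linear_combination v (Sum.inl 1) * hu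
        | linear_combination (-(v (Sum.inl 1))) * hu
        | linear_combination v (Sum.inr 1) * hu
        | linear_combination (-(v (Sum.inr 1))) * hu
  constructor
  · rw [mem_GammaA_iff]
    refine ⟨⟨1, one_ne_zero, hsim⟩, ?_, ?_, ?_⟩
    · intro i j
      rcases i with a | a <;> rcases j with b | b <;> fin_cases a <;> fin_cases b <;>
        simp [M3a, Fin.mk_zero, Fin.mk_one] <;>
        first
          | exact hv _
          | exact hun
          | exact mul_le_one₀ (hv _) (norm_nonneg _) hun
    · rw [gsp_norm_det p one_ne_zero hsim]; simp
    · intro a b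
      fin_cases a <;> fin_cases b <;> simp [M3a, Fin.mk_zero, Fin.mk_one] <;> positivity
  · rw [mulVec_e3]
    funext i
    rcases i with a | a <;> fin_cases a <;> simp [M3a, Fin.mk_zero, Fin.mk_one]


noncomputable def M3b (v : Idx → ℚ_[p]) (u : ℚ_[p]) : Matrix Idx Idx ℚ_[p] :=
  Matrix.fromBlocks !![0, 1; u, -(v (Sum.inr 0))*u] !![v (Sum.inl 0), 0; v (Sum.inl 1), v (Sum.inl 0)*u]
    0 !![v (Sum.inr 0), 1; v (Sum.inr 1), 0]

noncomputable def M1a (v : Idx → ℚ_[p]) (u : ℚ_[p]) : Matrix Idx Idx ℚ_[p] :=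
  Matrix.fromBlocks !![v (Sum.inl 0), 0; v (Sum.inl 1), 1] 0
    !![v (Sum.inr 0), v (Sum.inr 1)*u; v (Sum.inr 1), 0] !![u, -(v (Sum.inl 1))*u; 0, 1]

noncomputable def M1b (v : Idx → ℚ_[p]) (u : ℚ_[p]) : Matrix Idx Idx ℚ_[p] :=
  Matrix.fromBlocks !![v (Sum.inl 0), 1; v (Sum.inl 1), 0] 0
    !![v (Sum.inr 0), 0; v (Sum.inr 1), v (Sum.inr 0)*u] !![0, 1; u, -(v (Sum.inl 0))*u]

lemma M3b_spec (v : Idx → ℚ_[p]) (u : ℚ_[p]) (hu : u * v (Sum.inr 1) = 1) (hun : ‖u‖ ≤ 1)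
    (hv : ∀ i, ‖v i‖ ≤ 1) : M3b p v u ∈ GammaA p ∧ (M3b p v u).mulVec (e3 p) = v := by
  have hsim : (M3b p v u)ᵀ * Jmat p * (M3b p v u) = (1:ℚ_[p]) • Jmat p := by
    ext i j
    rcases i with a | a <;> rcases j with b | b <;> fin_cases a <;> fin_cases b <;>
      simp [Matrix.mul_apply, Fintype.sum_sum_type, Fin.sum_univ_two, Jmat, M3b, Fin.mk_zero, Fin.mk_one,
        Matrix.one_apply] <;>
      first
        | ring1
        | linear_combination hu
        | linear_combination (-1:ℚ_[p]) * hu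
        | linear_combination v (Sum.inl 0) * hu
        | linear_combination (-(v (Sum.inl 0))) * hu
        | linear_combination v (Sum.inl 1) * hu
        | linear_combination (-(v (Sum.inl 1))) * hu
        | linear_combination v (Sum.inr 0) * hu
        | linear_combination (-(v (Sum.inr 0))) * hu
  constructor
  · rw [mem_GammaA_iff]
    refine ⟨⟨1, one_ne_zero, hsim⟩, ?_, ?_, ?_⟩
    · intro i j
      rcases i with a | a <;> rcases j with b | b <;> fin_cases a <;> fin_cases b <;>
        simp [M3b, Fin.mk_zero, Fin.mk_one] <;>
        first
          | exact hv _
          | exact hun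
          | exact mul_le_one₀ (hv _) (norm_nonneg _) hun
    · rw [gsp_norm_det p one_ne_zero hsim]; simp
    · intro a b
      fin_cases a <;> fin_cases b <;> simp [M3b, Fin.mk_zero, Fin.mk_one] <;> positivity
  · rw [mulVec_e3]
    funext i
    rcases i with a | a <;> fin_cases a <;> simp [M3b, Fin.mk_zero, Fin.mk_one]

lemma M1a_spec (v : Idx → ℚ_[p]) (u : ℚ_[p]) (hu : u * v (Sum.inl 0) = 1) (hun : ‖u‖ ≤ 1)
    (hv : ∀ i, ‖v i‖ ≤ 1)
    (hv3 : ‖v (Sum.inr 0)‖ ≤ ‖(p:ℚ_[p])‖) (hv4 : ‖v (Sum.inr 1)‖ ≤ ‖(p:ℚ_[p])‖) :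
    M1a p v u ∈ GammaA p ∧ (M1a p v u).mulVec (e1 p) = v := by
  have hsim : (M1a p v u)ᵀ * Jmat p * (M1a p v u) = (1:ℚ_[p]) • Jmat p := by
    ext i j
    rcases i with a | a <;> rcases j with b | b <;> fin_cases a <;> fin_cases b <;>
      simp [Matrix.mul_apply, Fintype.sum_sum_type, Fin.sum_univ_two, Jmat, M1a, Fin.mk_zero, Fin.mk_one,
        Matrix.one_apply] <;>
      first
        | ring1
        | linear_combination hu
        | linear_combination (-1:ℚ_[p]) * hu
        | linear_combination v (Sum.inl 1) * hu
        | linear_combination (-(v (Sum.inl 1))) * hu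
        | linear_combination v (Sum.inr 0) * hu
        | linear_combination (-(v (Sum.inr 0))) * hu
        | linear_combination v (Sum.inr 1) * hu
        | linear_combination (-(v (Sum.inr 1))) * hu
  constructor
  · rw [mem_GammaA_iff]
    refine ⟨⟨1, one_ne_zero, hsim⟩, ?_, ?_, ?_⟩
    · intro i j
      rcases i with a | a <;> rcases j with b | b <;> fin_cases a <;> fin_cases b <;>
        simp [M1a, Fin.mk_zero, Fin.mk_one] <;>
        first
          | exact hv _
          | exact hun
          | exact mul_le_one₀ (hv _) (norm_nonneg _) hun
    · rw [gsp_norm_det p one_ne_zero hsim]; simp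
    · intro a b
      rw [Padic.norm_p] at hv3 hv4
      fin_cases a <;> fin_cases b <;> simp [M1a, Fin.mk_zero, Fin.mk_one] <;>
        first
          | positivity
          | exact hv3
          | exact hv4
          | exact le_trans (mul_le_of_le_one_right (norm_nonneg _) hun) hv4
          | exact le_trans (mul_le_of_le_one_right (norm_nonneg _) hun) hv3
  · rw [mulVec_e1]
    funext i
    rcases i with a | a <;> fin_cases a <;> simp [M1a, Fin.mk_zero, Fin.mk_one]

lemma M1b_spec (v : Idx → ℚ_[p]) (u : ℚ_[p]) (hu : u * v (Sum.inl 1) = 1) (hun : ‖u‖ ≤ 1)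
    (hv : ∀ i, ‖v i‖ ≤ 1)
    (hv3 : ‖v (Sum.inr 0)‖ ≤ ‖(p:ℚ_[p])‖) (hv4 : ‖v (Sum.inr 1)‖ ≤ ‖(p:ℚ_[p])‖) :
    M1b p v u ∈ GammaA p ∧ (M1b p v u).mulVec (e1 p) = v := by
  have hsim : (M1b p v u)ᵀ * Jmat p * (M1b p v u) = (1:ℚ_[p]) • Jmat p := by
    ext i j
    rcases i with a | a <;> rcases j with b | b <;> fin_cases a <;> fin_cases b <;>
      simp [Matrix.mul_apply, Fintype.sum_sum_type, Fin.sum_univ_two, Jmat, M1b, Fin.mk_zero, Fin.mk_one,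
        Matrix.one_apply] <;>
      first
        | ring1
        | linear_combination hu
        | linear_combination (-1:ℚ_[p]) * hu
        | linear_combination v (Sum.inl 0) * hu
        | linear_combination (-(v (Sum.inl 0))) * hu
        | linear_combination v (Sum.inr 0) * hu
        | linear_combination (-(v (Sum.inr 0))) * hu
        | linear_combination v (Sum.inr 1) * hu
        | linear_combination (-(v (Sum.inr 1))) * hu
  constructor
  · rw [mem_GammaA_iff]
    refine ⟨⟨1, one_ne_zero, hsim⟩, ?_, ?_, ?_⟩
    · intro i j
      rcases i with a | a <;> rcases j with b | b <;> fin_cases a <;> fin_cases b <;>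
        simp [M1b, Fin.mk_zero, Fin.mk_one] <;>
        first
          | exact hv _
          | exact hun
          | exact mul_le_one₀ (hv _) (norm_nonneg _) hun
    · rw [gsp_norm_det p one_ne_zero hsim]; simp
    · intro a b
      rw [Padic.norm_p] at hv3 hv4
      fin_cases a <;> fin_cases b <;> simp [M1b, Fin.mk_zero, Fin.mk_one] <;>
        first
          | positivity
          | exact hv3
          | exact hv4
          | exact le_trans (mul_le_of_le_one_right (norm_nonneg _) hun) hv4
          | exact le_trans (mul_le_of_le_one_right (norm_nonneg _) hun) hv3
  · rw [mulVec_e1]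
    funext i
    rcases i with a | a <;> fin_cases a <;> simp [M1b, Fin.mk_zero, Fin.mk_one]

end Orb15

namespace Orb15

theorem main (p : ℕ) [Fact p.Prime] :
    let orbit : (Idx → ℚ_[p]) → Set (Idx → ℚ_[p]) :=
      fun v => {w | ∃ X ∈ GammaA p, w = X.mulVec v}
    let AZ : Set (Idx → ℚ_[p]) := {w | ∃ v ∈ Zp4 p, w = (Amat p).mulVec v}
    let pZ : Set (Idx → ℚ_[p]) := {w | ∃ v ∈ Zp4 p, w = (p : ℚ_[p]) • v}
    orbit (e3 p) = Zp4 p \ AZ ∧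
    orbit (e1 p) = AZ \ pZ ∧
    Zp4 p = orbit (e3 p) ∪ orbit (e1 p) ∪ pZ ∧
    ([orbit (e3 p), orbit (e1 p), pZ] : List (Set (Idx → ℚ_[p]))).Pairwise Disjoint := by
  intro orbit AZ pZ
  have hAZ_mem : ∀ w : Idx → ℚ_[p], w ∈ AZ ↔
      ((∀ k, ‖w (Sum.inl k)‖ ≤ 1) ∧ (∀ k, ‖w (Sum.inr k)‖ ≤ ‖(p:ℚ_[p])‖)) :=
    fun w => mem_AZ_iff p w
  have hpZ_mem : ∀ w : Idx → ℚ_[p], w ∈ pZ ↔ ∀ i, ‖w i‖ ≤ ‖(p:ℚ_[p])‖ :=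
    fun w => mem_pZ_iff p w
  have hAZ_sub : AZ ⊆ Zp4 p := by
    intro w hw
    obtain ⟨h1, h2⟩ := (hAZ_mem w).mp hw
    intro i
    rcases i with k | k
    · exact h1 k
    · exact le_trans (h2 k) (normp_le_one p)
  have hpZ_sub : pZ ⊆ AZ := by
    intro w hw
    have h := (hpZ_mem w).mp hw
    exact (hAZ_mem w).mpr ⟨fun k => le_trans (h _) (normp_le_one p), fun k => h _⟩
  -- first equality
  have hE3 : orbit (e3 p) = Zp4 p \ AZ := by
    ext w
    constructor
    · rintro ⟨X, hX, rfl⟩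
      obtain ⟨⟨hQ, hint, hdet⟩, hQ', hint', hdetY⟩ := hX
      rw [mulVec_e3]
      constructor
      · intro i; exact hint i (Sum.inr 0)
      · intro hmem
        obtain ⟨h1, h2⟩ := (hAZ_mem _).mp hmem
        have hcol : ∀ i, ‖((Amat p)⁻¹ * X * Amat p) i (Sum.inr 0)‖ ≤ ‖(p:ℚ_[p])‖ := by
          intro i
          rw [conj_apply, dA_inr]
          rcases i with a | a
          · rw [dA_inl, inv_one, one_mul, norm_mul]
            calc ‖X (Sum.inl a) (Sum.inr 0)‖ * ‖(p:ℚ_[p])‖ ≤ 1 * ‖(p:ℚ_[p])‖ :=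
              mul_le_mul_of_nonneg_right (hint _ _) (norm_nonneg _)
            _ = ‖(p:ℚ_[p])‖ := one_mul _
          · have heq : ((p:ℚ_[p]))⁻¹ * X (Sum.inr a) (Sum.inr 0) * (p:ℚ_[p])
                = X (Sum.inr a) (Sum.inr 0) := by
              field_simp
              exact mul_div_cancel_left₀ _ (pne p)
            rw [dA_inr, heq]
            exact h2 a
        have := norm_det_le_p p _ hint' (Sum.inr 0) hcol
        rw [hdetY] at this
        exact absurd this (not_le.mpr (normp_lt_one p))
    · rintro ⟨hw, hnot⟩
      have hno : ¬ ((∀ k, ‖w (Sum.inl k)‖ ≤ 1) ∧ (∀ k, ‖w (Sum.inr k)‖ ≤ ‖(p:ℚ_[p])‖)) :=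
        fun h => hnot ((hAZ_mem w).mpr h)
      rcases not_and_or.mp hno with h | h
      · exact absurd (fun k => hw (Sum.inl k)) h
      · push_neg at h
        obtain ⟨k, hk⟩ := h
        fin_cases k
        · have hk' : ¬ ‖w (Sum.inr 0)‖ ≤ ‖(p:ℚ_[p])‖ := not_le.mpr hk
          have h1 : ‖w (Sum.inr 0)‖ = 1 := unit_of p _ (hw _) hk'
          have hne : w (Sum.inr 0) ≠ 0 := by
            intro h0; rw [h0] at h1; simp at h1
          have hu : (w (Sum.inr 0))⁻¹ * w (Sum.inr 0) = 1 := inv_mul_cancel₀ hne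
          have hun : ‖(w (Sum.inr 0))⁻¹‖ ≤ 1 := by
            rw [norm_inv, h1]; norm_num
          obtain ⟨hmem, heq⟩ := M3a_spec p w _ hu hun hw
          exact ⟨M3a p w _, hmem, heq.symm⟩
        · have hk' : ¬ ‖w (Sum.inr 1)‖ ≤ ‖(p:ℚ_[p])‖ := not_le.mpr hk
          have h1 : ‖w (Sum.inr 1)‖ = 1 := unit_of p _ (hw _) hk'
          have hne : w (Sum.inr 1) ≠ 0 := by
            intro h0; rw [h0] at h1; simp at h1
          have hu : (w (Sum.inr 1))⁻¹ * w (Sum.inr 1) = 1 := inv_mul_cancel₀ hne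
          have hun : ‖(w (Sum.inr 1))⁻¹‖ ≤ 1 := by
            rw [norm_inv, h1]; norm_num
          obtain ⟨hmem, heq⟩ := M3b_spec p w _ hu hun hw
          exact ⟨M3b p w _, hmem, heq.symm⟩
  -- second equality
  have hE1 : orbit (e1 p) = AZ \ pZ := by
    ext w
    constructor
    · rintro ⟨X, hX, rfl⟩
      obtain ⟨hQ, hint, hdet, hc⟩ := (mem_GammaA_iff p X).mp hX
      rw [mulVec_e1]
      constructor
      · exact (hAZ_mem _).mpr ⟨fun k => hint _ _, fun k => hc k 0⟩
      · intro hmem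
        have h := (hpZ_mem _).mp hmem
        have := norm_det_le_p p X hint (Sum.inl 0) (fun i => h i)
        rw [hdet] at this
        exact absurd this (not_le.mpr (normp_lt_one p))
    · rintro ⟨hw, hnot⟩
      obtain ⟨h1, h2⟩ := (hAZ_mem w).mp hw
      have hno : ¬ ∀ i, ‖w i‖ ≤ ‖(p:ℚ_[p])‖ := fun h => hnot ((hpZ_mem w).mpr h)
      push_neg at hno
      obtain ⟨i, hi⟩ := hno
      have hwZ : w ∈ Zp4 p := hAZ_sub hw
      rcases i with k | k
      · fin_cases k
        · have hi' : ¬ ‖w (Sum.inl 0)‖ ≤ ‖(p:ℚ_[p])‖ := not_le.mpr hi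
          have hn1 : ‖w (Sum.inl 0)‖ = 1 := unit_of p _ (h1 _) hi'
          have hne : w (Sum.inl 0) ≠ 0 := by
            intro h0; rw [h0] at hn1; simp at hn1
          have hu : (w (Sum.inl 0))⁻¹ * w (Sum.inl 0) = 1 := inv_mul_cancel₀ hne
          have hun : ‖(w (Sum.inl 0))⁻¹‖ ≤ 1 := by rw [norm_inv, hn1]; norm_num
          obtain ⟨hmem, heq⟩ := M1a_spec p w _ hu hun hwZ (h2 0) (h2 1)
          exact ⟨M1a p w _, hmem, heq.symm⟩
        · have hi' : ¬ ‖w (Sum.inl 1)‖ ≤ ‖(p:ℚ_[p])‖ := not_le.mpr hi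
          have hn1 : ‖w (Sum.inl 1)‖ = 1 := unit_of p _ (h1 _) hi'
          have hne : w (Sum.inl 1) ≠ 0 := by
            intro h0; rw [h0] at hn1; simp at hn1
          have hu : (w (Sum.inl 1))⁻¹ * w (Sum.inl 1) = 1 := inv_mul_cancel₀ hne
          have hun : ‖(w (Sum.inl 1))⁻¹‖ ≤ 1 := by rw [norm_inv, hn1]; norm_num
          obtain ⟨hmem, heq⟩ := M1b_spec p w _ hu hun hwZ (h2 0) (h2 1)
          exact ⟨M1b p w _, hmem, heq.symm⟩
      · exact absurd (h2 k) (not_le.mpr hi)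
  refine ⟨hE3, hE1, ?_, ?_⟩
  · ext w
    constructor
    · intro hw
      by_cases hA : w ∈ AZ
      · by_cases hp : w ∈ pZ
        · exact Or.inr hp
        · exact Or.inl (Or.inr (hE1 ▸ ⟨hA, hp⟩))
      · exact Or.inl (Or.inl (hE3 ▸ ⟨hw, hA⟩))
    · rintro ((h | h) | h)
      · rw [hE3] at h; exact h.1
      · rw [hE1] at h; exact hAZ_sub h.1
      · exact hAZ_sub (hpZ_sub h)
  · refine List.Pairwise.cons ?_ (List.Pairwise.cons ?_ (List.Pairwise.cons (by simp) List.Pairwise.nil))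
    · intro s hs
      simp only [List.mem_cons, List.mem_singleton, List.not_mem_nil] at hs
      rcases hs with rfl | rfl | h
      · rw [hE3, hE1]
        rw [Set.disjoint_left]
        rintro w ⟨_, hnA⟩ ⟨hA, _⟩
        exact hnA hA
      · rw [hE3, Set.disjoint_left]
        rintro w ⟨_, hnA⟩ hp
        exact hnA (hpZ_sub hp)
      · exact absurd h (by simp)
    · intro s hs
      simp only [List.mem_singleton] at hs
      subst hs
      rw [hE1, Set.disjoint_left]
      rintro w ⟨_, hnp⟩ hp
      exact hnp hp
end Orb15

theorem orbit_decomposition_GammaA (p : ℕ) [Fact p.Prime] :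
    let orbit : (Idx → ℚ_[p]) → Set (Idx → ℚ_[p]) :=
      fun v => {w | ∃ X ∈ GammaA p, w = X.mulVec v}
    let AZ : Set (Idx → ℚ_[p]) := {w | ∃ v ∈ Zp4 p, w = (Amat p).mulVec v}
    let pZ : Set (Idx → ℚ_[p]) := {w | ∃ v ∈ Zp4 p, w = (p : ℚ_[p]) • v}
    orbit (e3 p) = Zp4 p \ AZ ∧
    orbit (e1 p) = AZ \ pZ ∧
    Zp4 p = orbit (e3 p) ∪ orbit (e1 p) ∪ pZ ∧
    ([orbit (e3 p), orbit (e1 p), pZ] : List (Set (Idx → ℚ_[p]))).Pairwise Disjoint := Orb15.main p
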